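/- There is a universal constant c' > 0 such that for every r ≥ e, setting α = √(2 log r), the function f_α(x) = exp(αx - α²/2) satisfies γ_1({f_α ≥ r}) ≥ c'/(r √(log r)). -/

import Mathlib

open MeasureTheory ProbabilityTheory

theorem stmt_5 :
    ∃ c' : ℝ, 0 < c' ∧ ∀ r : ℝ, Real.exp 1 ≤ r →
      ENNReal.ofReal (c' / (r * Real.sqrt (Real.log r))) ≤
        gaussianReal 0 1
          {x | r ≤ Real.exp (Real.sqrt (2 * Real.log r) * x - (Real.sqrt (2 * Real.log r)) ^ 2 / 2)} := by
  refine ⟨Real.exp (-(5/4)) / (Real.sqrt (2 * Real.pi) * Real.sqrt 2), by positivity, ?_⟩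
  intro r hr
  have hrpos : (0:ℝ) < r := lt_of_lt_of_le (Real.exp_pos 1) hr
  have hL : (1:ℝ) ≤ Real.log r := (Real.le_log_iff_exp_le hrpos).mpr hr
  set L := Real.log r with hLdef
  set α := Real.sqrt (2 * L) with hαdef
  have hα2 : α ^ 2 = 2 * L := Real.sq_sqrt (by linarith)
  have hαpos : 0 < α := Real.sqrt_pos.mpr (by linarith)
  have hset : {x : ℝ | r ≤ Real.exp (α * x - α ^ 2 / 2)} = Set.Ici α := by
    ext x
    simp only [Set.mem_setOf_eq, Set.mem_Ici]
    rw [← Real.exp_log hrpos, Real.exp_le_exp, ← hLdef]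
    constructor <;> intro h <;> nlinarith
  rw [hset]
  have hsub : Set.Icc α (α + 1/α) ⊆ Set.Ici α := Set.Icc_subset_Ici_self
  refine le_trans ?_ (measure_mono (μ := gaussianReal 0 1) hsub)
  rw [gaussianReal_apply 0 (one_ne_zero) _]
  set c0 : ℝ := (Real.sqrt (2 * Real.pi))⁻¹ * (Real.exp (-(5/4)) / r) with hc0
  have hc0pos : 0 < c0 := by positivity
  have hpdf : ∀ x ∈ Set.Icc α (α + 1/α), ENNReal.ofReal c0 ≤ gaussianPDF 0 1 x := by
    intro x hx
    rw [gaussianPDF]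
    apply ENNReal.ofReal_le_ofReal
    rw [gaussianPDFReal]
    simp only [NNReal.coe_one, mul_one, sub_zero]
    rw [hc0]
    have hx1 : α ≤ x := hx.1
    have hx2 : x ≤ α + 1/α := hx.2
    have hx0 : 0 ≤ x := le_trans hαpos.le hx1
    have hxsq : x ^ 2 ≤ α ^ 2 + 5/2 := by
      have h1 : (1/α) ^ 2 ≤ 1/2 := by
        rw [div_pow, one_pow, div_le_div_iff₀ (by positivity) (by norm_num)]
        nlinarith
      have hαinv : α * (1/α) = 1 := by field_simp
      nlinarith [mul_nonneg (sub_nonneg.mpr hx2) (by linarith : (0:ℝ) ≤ α + 1/α + x)]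
    have hexp : Real.exp (-(5/4)) / r = Real.exp (-(α ^ 2 + 5/2) / 2) := by
      rw [hα2]
      rw [div_eq_mul_inv, ← Real.exp_log hrpos, ← hLdef, ← Real.exp_neg, ← Real.exp_add]
      congr 1
      ring
    rw [hexp]
    have hee : Real.exp (-(α ^ 2 + 5/2) / 2) ≤ Real.exp (-x ^ 2 / 2) := by
      rw [Real.exp_le_exp]
      linarith
    exact mul_le_mul_of_nonneg_left hee (by positivity)
  calc ENNReal.ofReal (Real.exp (-(5/4)) / (Real.sqrt (2 * Real.pi) * Real.sqrt 2) / (r * Real.sqrt L))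
      = ENNReal.ofReal (c0 * (1/α)) := by
        congr 1
        rw [hc0, hαdef, Real.sqrt_mul (by norm_num : (0:ℝ) ≤ 2)]
        have h2 : Real.sqrt 2 ≠ 0 := by positivity
        have hL0 : Real.sqrt L ≠ 0 := by
          have : (0:ℝ) < L := by linarith
          positivity
        have hπ : Real.sqrt (2 * Real.pi) ≠ 0 := by positivity
        field_simp
        ring
        rw [mul_comm L 2, Real.sqrt_mul (by norm_num : (0:ℝ) ≤ 2)]
    _ = ENNReal.ofReal c0 * volume (Set.Icc α (α + 1/α)) := by
        rw [Real.volume_Icc, ENNReal.ofReal_mul hc0pos.le]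
        congr 2
        ring
    _ ≤ ∫⁻ x in Set.Icc α (α + 1/α), gaussianPDF 0 1 x := by
        rw [← setLIntegral_const]
        exact setLIntegral_mono (measurable_gaussianPDF 0 1) hpdf
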